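/- In an orthomodular lattice admitting a strong set of quantum states, the 3-Godowski equation holds: (a₁→a₂)∩(a₂→a₃)∩(a₃→a₁) = (a₃→a₂)∩(a₂→a₁)∩(a₁→a₃), where a→b := a'∪(a∩b). -/
import Mathlib


/-- An ortholattice: an algebra ⟨L, ', ∪, ∩⟩ satisfying the standard identities. -/
structure OL (L : Type*) where
  compl : L → L
  join : L → L → L
  meet : L → L → L
  join_comm : ∀ a b, join a b = join b a
  join_assoc : ∀ a b c, join (join a b) c = join a (join b c)
  compl_compl : ∀ a, compl (compl a) = a
  join_one : ∀ a b, join a (join b (compl b)) = join b (compl b)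
  absorb : ∀ a b, join a (meet a b) = a
  meet_def : ∀ a b, meet a b = compl (join (compl a) (compl b))

/-- The ordering relation on an ortholattice: a ≤ b iff a ∩ b = a. -/
def OL.le {L : Type*} (O : OL L) (a b : L) : Prop := O.meet a b = a

/-- A state on an ortholattice: m : L → [0,1] with m(1) = 1 and finite additivity
on orthogonal pairs (a ⊥ b iff a ≤ b'). -/
def OL.IsState {L : Type*} (O : OL L) (m : L → ℝ) : Prop :=
  (∀ a, 0 ≤ m a ∧ m a ≤ 1) ∧
  (∀ a, m (O.join a (O.compl a)) = 1) ∧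
  (∀ a b, O.le a (O.compl b) → m (O.join a b) = m a + m b)

/-- Sasaki implication a → b := a' ∪ (a ∩ b). -/
def OL.arr {L : Type*} (O : OL L) (a b : L) : L := O.join (O.compl a) (O.meet a b)

/-- S is a strong set of quantum states on O. -/
def OL.IsStrongQuantum {L : Type*} (O : OL L) (S : Set (L → ℝ)) : Prop :=
  S.Nonempty ∧ (∀ m ∈ S, O.IsState m) ∧
  ∀ a b : L, ∃ m ∈ S, ((m a = 1 → m b = 1) → O.le a b)

namespace OL
variable {L : Type*} (O : OL L)

lemma meet_comm (a b : L) : O.meet a b = O.meet b a := by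
  rw [O.meet_def, O.meet_def, O.join_comm]

lemma demorgan (a b : L) : O.compl (O.meet a b) = O.join (O.compl a) (O.compl b) := by
  rw [O.meet_def, O.compl_compl]

lemma demorgan' (a b : L) :
    O.compl (O.join a b) = O.meet (O.compl a) (O.compl b) := by
  rw [O.meet_def, O.compl_compl, O.compl_compl]

lemma meet_assoc (a b c : L) : O.meet (O.meet a b) c = O.meet a (O.meet b c) := by
  rw [O.meet_def (O.meet a b) c, O.demorgan, O.join_assoc, ← O.demorgan b c, ← O.meet_def]

lemma absorb' (a b : L) : O.meet a (O.join a b) = a := by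
  rw [O.meet_def, O.demorgan' a b, O.absorb, O.compl_compl]

lemma join_self (a : L) : O.join a a = a := by
  have h := O.absorb a (O.join a a)
  rwa [O.absorb'] at h

lemma meet_self (a : L) : O.meet a a = a := by
  rw [O.meet_def, O.join_self, O.compl_compl]

lemma le_refl (a : L) : O.le a a := O.meet_self a

lemma join_of_le {a b : L} (h : O.le a b) : O.join a b = b := by
  have h2 := O.absorb b a
  rw [O.meet_comm, h] at h2
  rw [O.join_comm]; exact h2

lemma le_of_join {a b : L} (h : O.join a b = b) : O.le a b := by
  rw [OL.le, ← h]; exact O.absorb' a b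

lemma le_trans {a b c : L} (h1 : O.le a b) (h2 : O.le b c) : O.le a c := by
  rw [OL.le, ← h1, O.meet_assoc, h2]

lemma le_antisymm {a b : L} (h1 : O.le a b) (h2 : O.le b a) : a = b := by
  rw [← h1, O.meet_comm, h2]

lemma meet_le_left (a b : L) : O.le (O.meet a b) a := by
  rw [OL.le, O.meet_comm, ← O.meet_assoc, O.meet_self]

lemma meet_le_right (a b : L) : O.le (O.meet a b) b := by
  rw [OL.le, O.meet_assoc, O.meet_self]

lemma le_meet {x a b : L} (ha : O.le x a) (hb : O.le x b) : O.le x (O.meet a b) := by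
  rw [OL.le, ← O.meet_assoc, ha, hb]

lemma compl_le {a b : L} (h : O.le a b) : O.le (O.compl b) (O.compl a) := by
  apply O.le_of_join
  have : O.compl a = O.join (O.compl a) (O.compl b) := by rw [← O.demorgan, h]
  rw [O.join_comm]; exact this.symm

lemma le_top (a b : L) : O.le a (O.join b (O.compl b)) :=
  O.le_of_join (O.join_one a b)

lemma bot_le (a b : L) : O.le (O.meet b (O.compl b)) a := by
  have h := O.compl_le (O.le_top (O.compl a) (O.compl b))
  rwa [O.compl_compl a, ← O.meet_def] at h

lemma join_bot (a b : L) : O.join a (O.meet b (O.compl b)) = a := by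
  rw [O.join_comm]; exact O.join_of_le (O.bot_le a b)

end OL

namespace OL
variable {L : Type*} (O : OL L)

lemma om1 (hOML : ∀ a b c : L, O.le b a → O.le c (O.compl a) →
      O.meet a (O.join b c) = O.join (O.meet a b) (O.meet a c))
    {a b : L} (h : O.le a b) : O.meet b (O.join a (O.compl b)) = a := by
  have h1 := hOML b a (O.compl b) h (O.le_refl (O.compl b))
  rwa [O.meet_comm b a, h, O.join_bot] at h1

lemma om2 (hOML : ∀ a b c : L, O.le b a → O.le c (O.compl a) →
      O.meet a (O.join b c) = O.join (O.meet a b) (O.meet a c))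
    {a b : L} (h : O.le a b) : O.join a (O.meet b (O.compl a)) = b := by
  have h1 := O.om1 hOML (O.compl_le h)
  rw [O.compl_compl] at h1
  have h2 := congrArg O.compl h1
  rw [O.compl_compl, O.demorgan, O.compl_compl, O.demorgan', O.compl_compl] at h2
  exact h2

lemma s_compl {m : L → ℝ} (hm : O.IsState m) (a : L) : m (O.compl a) = 1 - m a := by
  have hadd := hm.2.2 a (O.compl a) (by rw [O.compl_compl]; exact O.le_refl a)
  have h1 := hm.2.1 a
  linarith [h1, hadd]

lemma s_mono (hOML : ∀ a b c : L, O.le b a → O.le c (O.compl a) →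
      O.meet a (O.join b c) = O.join (O.meet a b) (O.meet a c))
    {m : L → ℝ} (hm : O.IsState m) {a b : L} (h : O.le a b) : m a ≤ m b := by
  have hom := O.om2 hOML h
  have hperp : O.le a (O.compl (O.meet b (O.compl a))) := by
    rw [O.demorgan, O.compl_compl]
    apply O.le_of_join
    rw [O.join_comm, O.join_assoc, O.join_self]
  have hadd := hm.2.2 a (O.meet b (O.compl a)) hperp
  rw [hom] at hadd
  have := (hm.1 (O.meet b (O.compl a))).1
  linarith

lemma s_arr {m : L → ℝ} (hm : O.IsState m) (a b : L) :
    m (O.arr a b) = 1 - m a + m (O.meet a b) := by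
  have hperp : O.le (O.compl a) (O.compl (O.meet a b)) := by
    rw [O.demorgan]
    apply O.le_of_join
    rw [← O.join_assoc, O.join_self]
  have hadd := hm.2.2 (O.compl a) (O.meet a b) hperp
  rw [OL.arr, hadd, O.s_compl hm]

lemma s_one {m : L → ℝ} (hm : O.IsState m) {a b : L} (h : m (O.arr a b) = 1) :
    m (O.meet a b) = m a := by
  have := O.s_arr hm a b
  linarith

end OL

namespace OL
variable {L : Type*} (O : OL L)

lemma godowski_states (hOML : ∀ a b c : L, O.le b a → O.le c (O.compl a) →
      O.meet a (O.join b c) = O.join (O.meet a b) (O.meet a c))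
    {m : L → ℝ} (hm : O.IsState m) (a₁ a₂ a₃ : L)
    (hP : m (O.meet (O.arr a₁ a₂) (O.meet (O.arr a₂ a₃) (O.arr a₃ a₁))) = 1) :
    m (O.arr a₃ a₂) = 1 ∧ m (O.arr a₂ a₁) = 1 ∧ m (O.arr a₁ a₃) = 1 := by
  set P := O.meet (O.arr a₁ a₂) (O.meet (O.arr a₂ a₃) (O.arr a₃ a₁)) with hPdef
  have l12 : O.le P (O.arr a₁ a₂) := O.meet_le_left _ _
  have l23 : O.le P (O.arr a₂ a₃) :=
    O.le_trans (O.meet_le_right _ _) (O.meet_le_left _ _)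
  have l31 : O.le P (O.arr a₃ a₁) :=
    O.le_trans (O.meet_le_right _ _) (O.meet_le_right _ _)
  have one : ∀ x : L, O.le P x → m x = 1 := fun x hx => by
    have h1 := O.s_mono hOML hm hx
    have h2 := (hm.1 x).2
    rw [hP] at h1
    linarith
  have e12 := O.s_one hm (one _ l12)
  have e23 := O.s_one hm (one _ l23)
  have e31 := O.s_one hm (one _ l31)
  have i12 : m a₁ ≤ m a₂ := by
    have := O.s_mono hOML hm (O.meet_le_right a₁ a₂); linarith
  have i23 : m a₂ ≤ m a₃ := by
    have := O.s_mono hOML hm (O.meet_le_right a₂ a₃); linarith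
  have i31 : m a₃ ≤ m a₁ := by
    have := O.s_mono hOML hm (O.meet_le_right a₃ a₁); linarith
  refine ⟨?_, ?_, ?_⟩
  · rw [O.s_arr hm, O.meet_comm]; linarith
  · rw [O.s_arr hm, O.meet_comm]; linarith
  · rw [O.s_arr hm, O.meet_comm]; linarith

lemma godowski_le (hOML : ∀ a b c : L, O.le b a → O.le c (O.compl a) →
      O.meet a (O.join b c) = O.join (O.meet a b) (O.meet a c))
    {S : Set (L → ℝ)} (hS : O.IsStrongQuantum S) (a₁ a₂ a₃ : L) :
    O.le (O.meet (O.arr a₁ a₂) (O.meet (O.arr a₂ a₃) (O.arr a₃ a₁)))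
      (O.meet (O.arr a₃ a₂) (O.meet (O.arr a₂ a₁) (O.arr a₁ a₃))) := by
  set P := O.meet (O.arr a₁ a₂) (O.meet (O.arr a₂ a₃) (O.arr a₃ a₁)) with hPdef
  have key : ∀ x : L,
      (∀ m : L → ℝ, O.IsState m → m P = 1 → m x = 1) → O.le P x := fun x hx => by
    obtain ⟨m, hmS, himp⟩ := hS.2.2 P x
    exact himp (hx m (hS.2.1 m hmS))
  refine O.le_meet (key _ fun m hm hP => ?_)
    (O.le_meet (key _ fun m hm hP => ?_) (key _ fun m hm hP => ?_))
  · exact (O.godowski_states hOML hm a₁ a₂ a₃ hP).1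
  · exact (O.godowski_states hOML hm a₁ a₂ a₃ hP).2.1
  · exact (O.godowski_states hOML hm a₁ a₂ a₃ hP).2.2

end OL

theorem stmt_6 {L : Type*} (O : OL L)
    (hOML : ∀ a b c : L, O.le b a → O.le c (O.compl a) →
      O.meet a (O.join b c) = O.join (O.meet a b) (O.meet a c))
    (S : Set (L → ℝ)) (hS : O.IsStrongQuantum S)
    (a₁ a₂ a₃ : L) :
    O.meet (O.arr a₁ a₂) (O.meet (O.arr a₂ a₃) (O.arr a₃ a₁)) =
      O.meet (O.arr a₃ a₂) (O.meet (O.arr a₂ a₁) (O.arr a₁ a₃)) :=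
  O.le_antisymm (O.godowski_le hOML hS a₁ a₂ a₃) (O.godowski_le hOML hS a₃ a₂ a₁)
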